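/- arXiv:1809.01455 — 4 statements merged into one kernel-verified Lean document; each statement's English description precedes it below -/
import Mathlib

section
/- Let Φ be a strictly isotonic, strongly strictly concave function on positive definite d×d matrices. Let μ, ζ be probability measures on ℝ^d with means a_μ, a_ζ and positive definite covariances Σ_μ, Σ_ζ. If the Burbea-Rao divergence D(μ,ζ) = Φ[(Σ_μ+Σ_ζ)/2 + (a_ζ-a_μ)(a_ζ-a_μ)ᵀ/4] - [Φ(Σ_μ)+Φ(Σ_ζ)]/2 equals zero, then a_μ = a_ζ and Σ_μ = Σ_ζ. -/
open Matrix

lemma aux_smul_posDef {d : ℕ} {c : ℝ} (hc : 0 < c) {M : Matrix (Fin d) (Fin d) ℝ}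
    (hM : M.PosDef) : (c • M).PosDef := by
  exact hM.smul hc

lemma aux_smul_posSemidef {d : ℕ} {c : ℝ} (hc : 0 ≤ c) {M : Matrix (Fin d) (Fin d) ℝ}
    (hM : M.PosSemidef) : (c • M).PosSemidef := by
  exact hM.smul hc

lemma aux_vecMulVec_posSemidef {d : ℕ} (v : Fin d → ℝ) :
    (vecMulVec v v).PosSemidef := by
  simpa using posSemidef_vecMulVec_self_star v

lemma aux_vecMulVec_ne_zero {d : ℕ} {v : Fin d → ℝ} (hv : v ≠ 0) :
    vecMulVec v v ≠ 0 := by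
  obtain ⟨i, hi⟩ := Function.ne_iff.mp hv
  intro h
  have h2 := congrFun (congrFun h i) i
  rw [vecMulVec_apply] at h2
  exact hi (by simpa [mul_self_eq_zero] using h2)

/-- If Φ is strictly isotonic and strongly strictly concave on positive
definite matrices, then the vanishing of the Burbea-Rao divergence between two
distributions with means a_μ, a_ζ and positive definite covariances Σ_μ, Σ_ζ forces
equal means and covariances. -/
theorem burbeaRao_distinguishes
    (d : ℕ) (Φ : Matrix (Fin d) (Fin d) ℝ → ℝ)
    (hiso : ∀ M₁ M₂ : Matrix (Fin d) (Fin d) ℝ, M₂.PosDef → (M₁ - M₂).PosSemidef →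
      M₁ ≠ M₂ → Φ M₂ < Φ M₁)
    (hconcave : ∀ (α : ℝ), 0 < α → α < 1 →
      ∀ M₁ M₂ : Matrix (Fin d) (Fin d) ℝ, M₁.PosDef → M₂.PosSemidef → M₂ ≠ 0 →
        M₂ ≠ M₁ →
        (1 - α) * Φ M₁ + α * Φ M₂ < Φ ((1 - α) • M₁ + α • M₂))
    (aμ aζ : Fin d → ℝ) (Sμ Sζ : Matrix (Fin d) (Fin d) ℝ)
    (hSμ : Sμ.PosDef) (hSζ : Sζ.PosDef)
    (hD : Φ ((1 / 2 : ℝ) • (Sμ + Sζ) + (1 / 4 : ℝ) • vecMulVec (aζ - aμ) (aζ - aμ))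
            - (Φ Sμ + Φ Sζ) / 2 = 0) :
    aμ = aζ ∧ Sμ = Sζ := by
  rcases Nat.eq_zero_or_pos d with hd | hd
  · subst hd
    exact ⟨funext fun i => i.elim0, Matrix.ext fun i _ => i.elim0⟩
  set v : Fin d → ℝ := aζ - aμ with hv
  set mid : Matrix (Fin d) (Fin d) ℝ := (1 / 2 : ℝ) • (Sμ + Sζ) with hmid
  set M : Matrix (Fin d) (Fin d) ℝ := mid + (1 / 4 : ℝ) • vecMulVec v v with hM
  have hmidPD : mid.PosDef := aux_smul_posDef (by norm_num) (hSμ.add_posSemidef hSζ.posSemidef)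
  have hPhiM : Φ M = (Φ Sμ + Φ Sζ) / 2 := by linarith [hD]
  have hsub : (M - mid).PosSemidef := by
    have h : M - mid = (1 / 4 : ℝ) • vecMulVec v v := by rw [hM, add_sub_cancel_left]
    rw [h]
    exact aux_smul_posSemidef (by norm_num) (aux_vecMulVec_posSemidef v)
  have hneM : v ≠ 0 → M ≠ mid := by
    intro hv0 h
    rw [hM, add_eq_left, smul_eq_zero] at h
    rcases h with h | h
    · norm_num at h
    · exact aux_vecMulVec_ne_zero hv0 h
  -- Φ(M) ≥ Φ(mid)
  have hB : Φ mid ≤ Φ M := by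
    by_cases hv0 : v = 0
    · have h0 : vecMulVec v v = 0 := by
        rw [hv0]
        ext i j
        simp [vecMulVec_apply]
      have : M = mid := by rw [hM, h0, smul_zero, add_zero]
      rw [this]
    · exact le_of_lt (hiso M mid hmidPD hsub (hneM hv0))
  -- First: Sμ = Sζ
  have hS : Sμ = Sζ := by
    by_contra hne
    have hζ0 : Sζ ≠ 0 := by
      intro h0
      have hsingle : (Pi.single ⟨0, hd⟩ 1 : Fin d → ℝ) ≠ 0 := by
        intro hc
        have := congrFun hc ⟨0, hd⟩
        simp at this
      have := hSζ.dotProduct_mulVec_pos hsingle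
      rw [h0] at this
      simp at this
    have hcon := hconcave (1/2) (by norm_num) (by norm_num) Sμ Sζ hSμ hSζ.posSemidef hζ0
      (Ne.symm hne)
    have hmid_eq : (1 - (1/2 : ℝ)) • Sμ + (1/2 : ℝ) • Sζ = mid := by
      rw [hmid, smul_add]; norm_num
    rw [hmid_eq] at hcon
    have : (Φ Sμ + Φ Sζ) / 2 < Φ mid := by linarith
    linarith [hPhiM, hB]
  -- Second: aμ = aζ
  refine ⟨?_, hS⟩
  by_contra hne
  have hv0 : v ≠ 0 := by
    intro h
    exact hne (sub_eq_zero.mp (hv ▸ h)).symm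
  have hstrict := hiso M mid hmidPD hsub (hneM hv0)
  have hmid_eq : Φ mid = (Φ Sμ + Φ Sζ) / 2 := by
    have h1 : mid = Sμ := by rw [hmid, hS]; module
    rw [h1, hS]
    ring
  linarith [hPhiM]
end

section
/- Let Φ be a strictly isotonic, strongly strictly concave, differentiable function on positive definite d×d matrices. Define the Jeffreys-Bregman divergence of two probability measures μ, ζ with means a_μ, a_ζ and positive definite covariances Σ_μ, Σ_ζ by D(μ,ζ) = ½ tr[(∇Φ(Σ_μ) - ∇Φ(Σ_ζ))(Σ_ζ - Σ_μ)] + ½ (a_ζ - a_μ)ᵀ[∇Φ(Σ_μ) + ∇Φ(Σ_ζ)](a_ζ - a_μ). Then D(μ,ζ) = 0 implies a_μ = a_ζ and Σ_μ = Σ_ζ. -/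
open Matrix

lemma trace_mul_vecMulVec {d : ℕ} (M : Matrix (Fin d) (Fin d) ℝ) (x : Fin d → ℝ) :
    (M * vecMulVec x x).trace = x ⬝ᵥ (M *ᵥ x) := by
  simp [Matrix.trace, Matrix.mul_apply, Matrix.vecMulVec_apply, dotProduct,
    Matrix.mulVec, Finset.mul_sum, Matrix.diag]
  congr 1; ext i; congr 1; ext j; ring

lemma vecMulVec_self_posSemidef {d : ℕ} (x : Fin d → ℝ) :
    (vecMulVec x x).PosSemidef := by
  refine PosSemidef.of_dotProduct_mulVec_nonneg ?_ ?_
  · ext i j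
    simp [Matrix.conjTranspose_apply, Matrix.vecMulVec_apply, mul_comm]
  · intro y
    have h : star y ⬝ᵥ (vecMulVec x x *ᵥ y) = (x ⬝ᵥ y) * (x ⬝ᵥ y) := by
      simp [Matrix.vecMulVec_apply, dotProduct, Matrix.mulVec, Finset.mul_sum,
        Finset.sum_mul]
      rw [Finset.sum_comm]
      congr 1; ext i; congr 1; ext j; ring
    rw [h]
    exact mul_self_nonneg _

lemma vecMulVec_self_ne_zero {d : ℕ} {x : Fin d → ℝ} (hx : x ≠ 0) :
    vecMulVec x x ≠ 0 := by
  obtain ⟨i, hi⟩ := Function.ne_iff.mp hx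
  intro h
  have h2 := congrFun (congrFun h i) i
  exact hi (mul_self_eq_zero.mp (by simpa [Matrix.vecMulVec_apply] using h2))

lemma grad_posDef {d : ℕ} (Φ : Matrix (Fin d) (Fin d) ℝ → ℝ)
    (grad : Matrix (Fin d) (Fin d) ℝ → Matrix (Fin d) (Fin d) ℝ)
    (hsymm : ∀ M : Matrix (Fin d) (Fin d) ℝ, M.PosDef → (grad M).IsSymm)
    (hiso : ∀ M₁ M₂ : Matrix (Fin d) (Fin d) ℝ, M₂.PosDef → (M₁ - M₂).PosSemidef →
      M₁ ≠ M₂ → Φ M₂ < Φ M₁)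
    (hgrad : ∀ A B : Matrix (Fin d) (Fin d) ℝ, A.PosDef → B.PosDef → A ≠ B →
      Φ B < Φ A + (grad A * (B - A)).trace)
    (A : Matrix (Fin d) (Fin d) ℝ) (hA : A.PosDef) : (grad A).PosDef := by
  refine PosDef.of_dotProduct_mulVec_pos ?_ ?_
  · have h := hsymm A hA
    rw [Matrix.IsHermitian]
    ext i j
    simpa [Matrix.conjTranspose_apply] using congrFun (congrFun h i) j
  · intro x hx
    set B := A + vecMulVec x x with hB
    have hpsd := vecMulVec_self_posSemidef x
    have hBpd : B.PosDef := hA.add_posSemidef hpsd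
    have hBA : B - A = vecMulVec x x := by exact add_sub_cancel_left A _
    have hne : B ≠ A := by
      intro h
      have : vecMulVec x x = 0 := by rw [← hBA, h, sub_self]
      exact vecMulVec_self_ne_zero hx this
    have h1 := hgrad A B hA hBpd (Ne.symm hne)
    have h2 := hiso B A hA (hBA ▸ hpsd) hne
    have h3 : 0 < (grad A * (B - A)).trace := by linarith
    rw [hBA, trace_mul_vecMulVec] at h3
    simpa using h3

/-- If Φ is strictly isotonic, strongly strictly concave and differentiable
on positive definite matrices (gradients symmetric, satisfying the strict first-order
inequality), then vanishing of the Jeffreys-Bregman divergence forces equal means and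
covariances. -/
theorem jeffreysBregman_distinguishes
    (d : ℕ) (Φ : Matrix (Fin d) (Fin d) ℝ → ℝ)
    (grad : Matrix (Fin d) (Fin d) ℝ → Matrix (Fin d) (Fin d) ℝ)
    (hsymm : ∀ M : Matrix (Fin d) (Fin d) ℝ, M.PosDef → (grad M).IsSymm)
    (hiso : ∀ M₁ M₂ : Matrix (Fin d) (Fin d) ℝ, M₂.PosDef → (M₁ - M₂).PosSemidef →
      M₁ ≠ M₂ → Φ M₂ < Φ M₁)
    (hgrad : ∀ A B : Matrix (Fin d) (Fin d) ℝ, A.PosDef → B.PosDef → A ≠ B →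
      Φ B < Φ A + (grad A * (B - A)).trace)
    (aμ aζ : Fin d → ℝ) (Sμ Sζ : Matrix (Fin d) (Fin d) ℝ)
    (hSμ : Sμ.PosDef) (hSζ : Sζ.PosDef)
    (hD : (1 / 2 : ℝ) * ((grad Sμ - grad Sζ) * (Sζ - Sμ)).trace
        + (1 / 2 : ℝ) * ((aζ - aμ) ⬝ᵥ ((grad Sμ + grad Sζ) *ᵥ (aζ - aμ))) = 0) :
    aμ = aζ ∧ Sμ = Sζ := by
  have hgμ := grad_posDef Φ grad hsymm hiso hgrad Sμ hSμ
  have hgζ := grad_posDef Φ grad hsymm hiso hgrad Sζ hSζ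
  set t1 := ((grad Sμ - grad Sζ) * (Sζ - Sμ)).trace with ht1def
  set t2 := (aζ - aμ) ⬝ᵥ ((grad Sμ + grad Sζ) *ᵥ (aζ - aμ)) with ht2def
  have ht1 : 0 ≤ t1 := by
    by_cases h : Sμ = Sζ
    · simp [ht1def, h]
    · have h1 := hgrad Sμ Sζ hSμ hSζ h
      have h2 := hgrad Sζ Sμ hSζ hSμ (Ne.symm h)
      have key : t1 = (grad Sμ * (Sζ - Sμ)).trace + (grad Sζ * (Sμ - Sζ)).trace := by
        rw [ht1def, sub_mul, trace_sub, ← neg_sub Sζ Sμ, mul_neg, trace_neg]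
        ring
      linarith
  have ht2 : 0 ≤ t2 := by
    by_cases h : aζ - aμ = 0
    · simp [ht2def, h]
    · have := (hgμ.add hgζ).dotProduct_mulVec_pos h
      simp only [star_trivial] at this
      exact le_of_lt this
  have h1z : t1 = 0 := by linarith
  have h2z : t2 = 0 := by linarith
  constructor
  · by_contra h
    have hne : aζ - aμ ≠ 0 := sub_ne_zero.mpr (Ne.symm h)
    have := (hgμ.add hgζ).dotProduct_mulVec_pos hne
    simp only [star_trivial] at this
    rw [← ht2def, h2z] at this
    exact lt_irrefl _ this
  · by_contra h
    have h1 := hgrad Sμ Sζ hSμ hSζ h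
    have h2 := hgrad Sζ Sμ hSζ hSμ (Ne.symm h)
    have key : t1 = (grad Sμ * (Sζ - Sμ)).trace + (grad Sζ * (Sμ - Sζ)).trace := by
      rw [ht1def, sub_mul, trace_sub, ← neg_sub Sζ Sμ, mul_neg, trace_neg]
      ring
    linarith
end

section
/- For d×d positive definite matrices and 0 < p < 1, Kiefer's criterion φ_p(M) = [(1/d) tr(M^p)]^{1/p} is strictly isotonic: if M₁ - M₂ is positive semidefinite, M₂ positive definite, and M₁ ≠ M₂, then φ_p(M₁) > φ_p(M₂). -/
open Matrix

variable {d : ℕ}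

lemma aux_diag_nonneg {A : Matrix (Fin d) (Fin d) ℝ} (hA : A.PosSemidef) (i : Fin d) :
    0 ≤ A i i := by
  exact hA.diag_nonneg

lemma aux_trace_eq_sum_eigenvalues {A : Matrix (Fin d) (Fin d) ℝ} (hA : A.IsHermitian) :
    A.trace = ∑ i, hA.eigenvalues i := by
  conv_lhs => rw [hA.spectral_theorem]
  rw [Unitary.conjStarAlgAut_apply, trace_mul_comm, ← mul_assoc, (Matrix.mem_unitaryGroup_iff'.mp (hA.eigenvectorUnitary).2),
    one_mul, trace_diagonal]
  simp [RCLike.ofReal_real_eq_id]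

lemma aux_trace_pos {A : Matrix (Fin d) (Fin d) ℝ} (hA : A.PosSemidef) (h : A ≠ 0) :
    0 < A.trace := by
  rw [aux_trace_eq_sum_eigenvalues hA.1]
  have hnn := hA.eigenvalues_nonneg
  have : ∃ i, hA.1.eigenvalues i ≠ 0 := by
    by_contra hall
    push_neg at hall
    apply h
    have := hA.1.spectral_theorem
    rw [show (RCLike.ofReal ∘ hA.1.eigenvalues : Fin d → ℝ) = 0 by ext i; simp [hall i]] at this
    rw [show (0 : Fin d → ℝ) = fun _ => 0 from rfl, diagonal_zero, map_zero] at this; exact this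
  obtain ⟨i, hi⟩ := this
  exact Finset.sum_pos' (fun j _ => hnn j) ⟨i, Finset.mem_univ i, lt_of_le_of_ne (hnn i) (Ne.symm hi)⟩


/-- Kiefer's φ_p criterion on symmetric matrices, defined spectrally:
tr(M^p) = ∑ λᵢ(M)^p. -/
noncomputable def kieferPhi {d : ℕ} (p : ℝ) (M : Matrix (Fin d) (Fin d) ℝ)
    (hM : M.IsHermitian) : ℝ :=
  ((1 / (d : ℝ)) * ∑ i, hM.eigenvalues i ^ p) ^ ((1 : ℝ) / p)

/-- For 0 < p < 1, φ_p is strictly isotonic: M₁ ⪰ M₂ ≻ 0 and M₁ ≠ M₂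
imply φ_p(M₁) > φ_p(M₂). -/
theorem kieferPhi_strictly_isotonic
    (d : ℕ) (hd : 0 < d) (p : ℝ) (hp0 : 0 < p) (hp1 : p < 1)
    (M₁ M₂ : Matrix (Fin d) (Fin d) ℝ)
    (hM₁ : M₁.IsHermitian) (hM₂ : M₂.PosDef)
    (hle : (M₁ - M₂).PosSemidef) (hne : M₁ ≠ M₂) :
    kieferPhi p M₂ hM₂.1 < kieferPhi p M₁ hM₁ := by
  classical
  set U : Matrix (Fin d) (Fin d) ℝ := (hM₁.eigenvectorUnitary : Matrix (Fin d) (Fin d) ℝ) with hUdef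
  set W : Matrix (Fin d) (Fin d) ℝ := (hM₂.1.eigenvectorUnitary : Matrix (Fin d) (Fin d) ℝ) with hWdef
  set lam := hM₁.eigenvalues with hlam
  set μ := hM₂.1.eigenvalues with hmu
  set V : Matrix (Fin d) (Fin d) ℝ := star U * W with hVdef
  have hofreal₁ : (RCLike.ofReal ∘ lam : Fin d → ℝ) = lam := by
    ext i; simp [RCLike.ofReal_real_eq_id]
  have hofreal₂ : (RCLike.ofReal ∘ μ : Fin d → ℝ) = μ := by
    ext i; simp [RCLike.ofReal_real_eq_id]
  have hUU : star U * U = 1 := Matrix.mem_unitaryGroup_iff'.mp hM₁.eigenvectorUnitary.2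
  have hUU' : U * star U = 1 := Matrix.mem_unitaryGroup_iff.mp hM₁.eigenvectorUnitary.2
  have hWW : star W * W = 1 := Matrix.mem_unitaryGroup_iff'.mp hM₂.1.eigenvectorUnitary.2
  have hWW' : W * star W = 1 := Matrix.mem_unitaryGroup_iff.mp hM₂.1.eigenvectorUnitary.2
  have hVV : V * star V = 1 := by
    rw [hVdef, Matrix.star_mul, star_star, mul_assoc, ← mul_assoc W, hWW', one_mul, hUU]
  have hVV' : star V * V = 1 := by
    rw [hVdef, Matrix.star_mul, star_star, mul_assoc, ← mul_assoc U, hUU', one_mul, hWW]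
  have hrow : ∀ i, ∑ j, (V i j) ^ 2 = 1 := by
    intro i
    have h1 := congrArg (fun M : Matrix (Fin d) (Fin d) ℝ => M i i) hVV
    simpa [Matrix.mul_apply, Matrix.star_apply, Matrix.one_apply, sq] using h1
  have hcol : ∀ j, ∑ i, (V i j) ^ 2 = 1 := by
    intro j
    have h1 := congrArg (fun M : Matrix (Fin d) (Fin d) ℝ => M j j) hVV'
    simpa [Matrix.mul_apply, Matrix.star_apply, Matrix.one_apply, sq, mul_comm] using h1
  have hM₂eq : M₂ = W * diagonal μ * star W := by
    have h := hM₂.1.spectral_theorem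
    rwa [show diagonal (RCLike.ofReal ∘ hM₂.1.eigenvalues) = diagonal μ by rw [← hofreal₂]] at h
  have hdiag₁ : star U * M₁ * U = diagonal lam := by
    have h := hM₁.conjStarAlgAut_star_eigenvectorUnitary
    rw [Unitary.conjStarAlgAut_apply, Unitary.coe_star, star_star] at h
    rwa [show diagonal (RCLike.ofReal ∘ hM₁.eigenvalues) = diagonal lam by rw [← hofreal₁]] at h
  set s : Fin d → ℝ := fun i => ∑ j, (V i j) ^ 2 * μ j with hsdef
  have hsii : ∀ i, (star U * M₂ * U) i i = s i := by
    intro i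
    have key : star U * M₂ * U = V * diagonal μ * star V := by
      rw [hM₂eq, hVdef]
      simp only [Matrix.star_mul, star_star, mul_assoc]
    rw [key, Matrix.mul_apply]
    simp only [Matrix.mul_diagonal, Matrix.star_apply, star_trivial, hsdef]
    exact Finset.sum_congr rfl fun j _ => by ring
  have hlii : ∀ i, (star U * M₁ * U) i i = lam i := by
    intro i; rw [hdiag₁, Matrix.diagonal_apply_eq]
  have hD' : (star U * (M₁ - M₂) * U).PosSemidef := hle.conjTranspose_mul_mul_same U
  have hDdiag : ∀ i, (star U * (M₁ - M₂) * U) i i = lam i - s i := by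
    intro i
    have hsplit : star U * (M₁ - M₂) * U = star U * M₁ * U - star U * M₂ * U := by
      rw [mul_sub, sub_mul]
    rw [hsplit, Matrix.sub_apply, hlii, hsii]
  have hle_i : ∀ i, s i ≤ lam i := by
    intro i
    have := aux_diag_nonneg hD' i
    rw [hDdiag i] at this; linarith
  have hDne : star U * (M₁ - M₂) * U ≠ 0 := by
    intro h0
    apply hne
    have : M₁ - M₂ = U * (star U * (M₁ - M₂) * U) * star U := by
      simp only [← mul_assoc]
      rw [hUU', one_mul, mul_assoc, hUU', mul_one]
    rw [h0, Matrix.mul_zero, Matrix.zero_mul] at this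
    exact sub_eq_zero.mp this
  have htr : 0 < ∑ i, (lam i - s i) := by
    have h := aux_trace_pos hD' hDne
    rw [Matrix.trace] at h
    simpa [Matrix.diag, hDdiag] using h
  have hex : ∃ i, s i < lam i := by
    by_contra hall
    push_neg at hall
    have hsum : ∑ i, (lam i - s i) ≤ 0 :=
      Finset.sum_nonpos fun i _ => by have := hall i; linarith
    linarith
  have μpos : ∀ j, 0 < μ j := fun j => hM₂.eigenvalues_pos j
  have snonneg : ∀ i, 0 ≤ s i := fun i =>
    Finset.sum_nonneg fun j _ => mul_nonneg (sq_nonneg _) (μpos j).le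
  have hjen : ∀ i, ∑ j, (V i j) ^ 2 * μ j ^ p ≤ (s i) ^ p := by
    intro i
    have h := (Real.concaveOn_rpow hp0.le hp1.le).le_map_sum
      (t := Finset.univ) (w := fun j => (V i j) ^ 2) (p := fun j => μ j)
      (fun j _ => sq_nonneg _) (hrow i) (fun j _ => (μpos j).le)
    simpa [smul_eq_mul, hsdef] using h
  have hmain : ∑ j, μ j ^ p < ∑ i, lam i ^ p := by
    have h1 : ∑ j, μ j ^ p = ∑ i, ∑ j, (V i j) ^ 2 * μ j ^ p := by
      rw [Finset.sum_comm]
      refine Finset.sum_congr rfl fun j _ => ?_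
      rw [← Finset.sum_mul, hcol j, one_mul]
    have h2 : ∑ i, ∑ j, (V i j) ^ 2 * μ j ^ p ≤ ∑ i, (s i) ^ p :=
      Finset.sum_le_sum fun i _ => hjen i
    have h3 : ∑ i, (s i) ^ p < ∑ i, lam i ^ p := by
      obtain ⟨i₀, hi₀⟩ := hex
      exact Finset.sum_lt_sum (fun i _ => Real.rpow_le_rpow (snonneg i) (hle_i i) hp0.le)
        ⟨i₀, Finset.mem_univ _, Real.rpow_lt_rpow (snonneg i₀) hi₀ hp0⟩
    linarith
  have hdpos : (0:ℝ) < 1 / (d:ℝ) := by positivity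
  refine Real.rpow_lt_rpow ?_ ?_ (by positivity)
  · exact mul_nonneg hdpos.le
      (Finset.sum_nonneg fun j _ => Real.rpow_nonneg (μpos j).le p)
  · exact mul_lt_mul_of_pos_left hmain hdpos
end

section
/- For p ∈ (0,1) and positive definite d×d matrices Σ_μ and Σ_ζ, the quantity ½[tr(Σ_μ^{p-1}Σ_ζ)/tr(Σ_μ^p) + tr(Σ_ζ^{p-1}Σ_μ)/tr(Σ_ζ^p)] - 1 is nonnegative, and it is zero when Σ_ζ = Σ_μ. -/
open Matrix

/-- The real power M^p of a symmetric matrix, defined through the spectral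
decomposition. -/
noncomputable def matRpow {d : ℕ} (M : Matrix (Fin d) (Fin d) ℝ)
    (hM : M.IsHermitian) (p : ℝ) : Matrix (Fin d) (Fin d) ℝ :=
  (hM.eigenvectorUnitary : Matrix (Fin d) (Fin d) ℝ) *
    Matrix.diagonal (fun i => hM.eigenvalues i ^ p) *
    star (hM.eigenvectorUnitary : Matrix (Fin d) (Fin d) ℝ)

private lemma rpow_sub_one_mul' {x : ℝ} (hx : 0 < x) (p : ℝ) : x ^ (p - 1) * x = x ^ p := by
  have h := Real.rpow_add hx (p - 1) 1
  rw [sub_add_cancel, Real.rpow_one] at h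
  exact h.symm

private lemma rpow_tangent' {x y p : ℝ} (hx : 0 < x) (hy : 0 < y)
    (hp0 : 0 ≤ p) (hp1 : p ≤ 1) :
    y ^ p ≤ x ^ p + p * x ^ (p - 1) * (y - x) := by
  have hs : (-1 : ℝ) ≤ y / x - 1 := by
    have : 0 ≤ y / x := by positivity
    linarith
  have h := rpow_one_add_le_one_add_mul_self hs hp0 hp1
  rw [add_sub_cancel, Real.div_rpow hy.le hx.le] at h
  have hxp : (0 : ℝ) < x ^ p := Real.rpow_pos_of_pos hx p
  have h2 : y ^ p ≤ (1 + p * (y / x - 1)) * x ^ p := (div_le_iff₀ hxp).mp h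
  have ht : x ^ (p - 1) * x = x ^ p := rpow_sub_one_mul' hx p
  have h3 : (1 + p * (y / x - 1)) * x ^ p = x ^ p + p * x ^ (p - 1) * (y - x) := by
    field_simp
    linear_combination (p*x - p*y) * ht
  linarith [h3 ▸ h2]

private lemma trace_diag_mul' {d : ℕ} (f : Fin d → ℝ) (N : Matrix (Fin d) (Fin d) ℝ) :
    (Matrix.diagonal f * N).trace = ∑ i, f i * N i i := by
  simp [Matrix.trace, Matrix.diag, Matrix.diagonal_mul]

private lemma trace_matRpow' {d : ℕ} (M : Matrix (Fin d) (Fin d) ℝ)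
    (hM : M.IsHermitian) (q : ℝ) :
    (matRpow M hM q).trace = ∑ i, hM.eigenvalues i ^ q := by
  unfold matRpow
  rw [Matrix.trace_mul_cycle, Unitary.coe_star_mul_self, one_mul, Matrix.trace_diagonal]

private lemma trace_matRpow_mul' {d : ℕ} (M : Matrix (Fin d) (Fin d) ℝ)
    (hM : M.IsHermitian) (q : ℝ) (B : Matrix (Fin d) (Fin d) ℝ) :
    (matRpow M hM q * B).trace
      = ∑ i, hM.eigenvalues i ^ q
          * ((star (hM.eigenvectorUnitary : Matrix (Fin d) (Fin d) ℝ) * B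
              * (hM.eigenvectorUnitary : Matrix (Fin d) (Fin d) ℝ)) i i) := by
  unfold matRpow
  set U := (hM.eigenvectorUnitary : Matrix (Fin d) (Fin d) ℝ) with hU
  have h1 : U * Matrix.diagonal (fun i => hM.eigenvalues i ^ q) * star U * B
      = U * (Matrix.diagonal (fun i => hM.eigenvalues i ^ q) * (star U * B)) := by
    simp only [Matrix.mul_assoc]
  rw [h1, Matrix.trace_mul_comm, Matrix.mul_assoc, trace_diag_mul']

private lemma spectral_real' {d : ℕ} (B : Matrix (Fin d) (Fin d) ℝ) (hB : B.IsHermitian) :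
    B = (hB.eigenvectorUnitary : Matrix (Fin d) (Fin d) ℝ) *
        Matrix.diagonal hB.eigenvalues *
        star (hB.eigenvectorUnitary : Matrix (Fin d) (Fin d) ℝ) := by
  have h := hB.spectral_theorem
  have : Matrix.diagonal ((RCLike.ofReal : ℝ → ℝ) ∘ hB.eigenvalues)
      = Matrix.diagonal hB.eigenvalues := by
    congr 1
  rwa [this] at h


private lemma diag_conj_entry' {d : ℕ} (W : Matrix (Fin d) (Fin d) ℝ) (f : Fin d → ℝ)
    (i : Fin d) :
    (W * Matrix.diagonal f * star W) i i = ∑ j, f j * (W i j) ^ 2 := by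
  rw [Matrix.mul_apply]
  refine Finset.sum_congr rfl fun j _ => ?_
  rw [Matrix.mul_diagonal, Matrix.star_apply, star_trivial]
  ring

private lemma conj_entry' {d : ℕ} (B : Matrix (Fin d) (Fin d) ℝ) (hB : B.IsHermitian)
    (U : Matrix (Fin d) (Fin d) ℝ) (i : Fin d) :
    (star U * B * U) i i
      = ∑ j, hB.eigenvalues j *
          ((star U * (hB.eigenvectorUnitary : Matrix (Fin d) (Fin d) ℝ)) i j) ^ 2 := by
  have hmat : star U * B * U
      = (star U * (hB.eigenvectorUnitary : Matrix (Fin d) (Fin d) ℝ)) *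
          Matrix.diagonal hB.eigenvalues *
          star (star U * (hB.eigenvectorUnitary : Matrix (Fin d) (Fin d) ℝ)) := by
    conv_lhs => rw [spectral_real' B hB]
    rw [StarMul.star_mul, star_star]
    simp only [Matrix.mul_assoc]
  rw [hmat, diag_conj_entry']

private lemma row_col_sums' {d : ℕ} {W : Matrix (Fin d) (Fin d) ℝ}
    (h1 : W * star W = 1) (h2 : star W * W = 1) :
    (∀ i, ∑ j, (W i j) ^ 2 = 1) ∧ (∀ j, ∑ i, (W i j) ^ 2 = 1) := by
  constructor
  · intro i
    have h : (W * star W) i i = (1 : Matrix (Fin d) (Fin d) ℝ) i i := by rw [h1]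
    simpa [Matrix.mul_apply, Matrix.star_apply, Matrix.one_apply, pow_two] using h
  · intro j
    have h : (star W * W) j j = (1 : Matrix (Fin d) (Fin d) ℝ) j j := by rw [h2]
    simpa [Matrix.mul_apply, Matrix.star_apply, Matrix.one_apply, pow_two] using h

private lemma klein' {d : ℕ} {p : ℝ} (hp0 : 0 < p) (hp1 : p < 1)
    (A B : Matrix (Fin d) (Fin d) ℝ) (hA : A.PosDef) (hB : B.PosDef) :
    (matRpow B hB.1 p).trace + p * (matRpow A hA.1 p).trace
      ≤ (matRpow A hA.1 p).trace + p * (matRpow A hA.1 (p - 1) * B).trace := by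
  set lam := hA.1.eigenvalues with hlamdef
  set mu := hB.1.eigenvalues with hmudef
  set U := (hA.1.eigenvectorUnitary : Matrix (Fin d) (Fin d) ℝ) with hUdef
  set V := (hB.1.eigenvectorUnitary : Matrix (Fin d) (Fin d) ℝ) with hVdef
  set W := star U * V with hWdef
  have hVV : V * star V = 1 := by
    rw [hVdef]; exact Matrix.mem_unitaryGroup_iff.mp (hB.1.eigenvectorUnitary).2
  have hVV' : star V * V = 1 := by
    rw [hVdef]; exact Matrix.mem_unitaryGroup_iff'.mp (hB.1.eigenvectorUnitary).2
  have hUU : U * star U = 1 := by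
    rw [hUdef]; exact Matrix.mem_unitaryGroup_iff.mp (hA.1.eigenvectorUnitary).2
  have hUU' : star U * U = 1 := by
    rw [hUdef]; exact Matrix.mem_unitaryGroup_iff'.mp (hA.1.eigenvectorUnitary).2
  have hWW : W * star W = 1 := by
    rw [hWdef, StarMul.star_mul, star_star]
    calc star U * V * (star V * U) = star U * (V * star V) * U := by
          simp only [Matrix.mul_assoc]
      _ = star U * U := by rw [hVV, mul_one]
      _ = 1 := hUU'
  have hWW' : star W * W = 1 := by
    rw [hWdef, StarMul.star_mul, star_star]
    calc star V * U * (star U * V) = star V * (U * star U) * V := by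
          simp only [Matrix.mul_assoc]
      _ = star V * V := by rw [hUU, mul_one]
      _ = 1 := hVV' 
  obtain ⟨hrow, hcol⟩ := row_col_sums' hWW hWW'
  have hlp : ∀ i, 0 < lam i := hA.eigenvalues_pos
  have hmp : ∀ j, 0 < mu j := hB.eigenvalues_pos
  rw [trace_matRpow' B hB.1 p, trace_matRpow' A hA.1 p, trace_matRpow_mul' A hA.1 (p - 1) B,
    ← hlamdef, ← hmudef, ← hUdef]
  have e3 : ∑ i, lam i ^ (p - 1) * ((star U * B * U) i i)
      = ∑ i, ∑ j, (W i j) ^ 2 * (lam i ^ (p - 1) * mu j) := by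
    refine Finset.sum_congr rfl fun i _ => ?_
    rw [conj_entry' B hB.1 U i, ← hVdef, ← hmudef, ← hWdef, Finset.mul_sum]
    exact Finset.sum_congr rfl fun j _ => by ring
  have e1 : ∑ j, mu j ^ p = ∑ i, ∑ j, (W i j) ^ 2 * mu j ^ p := by
    rw [Finset.sum_comm]
    refine Finset.sum_congr rfl fun j _ => ?_
    rw [← Finset.sum_mul, hcol j, one_mul]
  have e2 : ∑ i, lam i ^ p = ∑ i, ∑ j, (W i j) ^ 2 * lam i ^ p := by
    refine Finset.sum_congr rfl fun i _ => ?_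
    rw [← Finset.sum_mul, hrow i, one_mul]
  rw [e1, e2, e3]
  have main : ∀ i j, (W i j) ^ 2 * mu j ^ p + p * ((W i j) ^ 2 * lam i ^ p)
      ≤ (W i j) ^ 2 * lam i ^ p + p * ((W i j) ^ 2 * (lam i ^ (p - 1) * mu j)) := by
    intro i j
    have hc : (0 : ℝ) ≤ (W i j) ^ 2 := sq_nonneg _
    have ht := rpow_tangent' (hlp i) (hmp j) hp0.le hp1.le
    have hx := rpow_sub_one_mul' (hlp i) p
    have h5 : (W i j) ^ 2 * mu j ^ p
        ≤ (W i j) ^ 2 * (lam i ^ p + p * lam i ^ (p - 1) * (mu j - lam i)) :=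
      mul_le_mul_of_nonneg_left ht hc
    have h6 : (W i j) ^ 2 * (lam i ^ p + p * lam i ^ (p - 1) * (mu j - lam i))
        = (W i j) ^ 2 * lam i ^ p + p * ((W i j) ^ 2 * (lam i ^ (p - 1) * mu j))
            - p * ((W i j) ^ 2 * lam i ^ p) := by
      rw [← hx]; ring
    linarith
  calc (∑ i, ∑ j, (W i j) ^ 2 * mu j ^ p) + p * ∑ i, ∑ j, (W i j) ^ 2 * lam i ^ p
      = ∑ i, ∑ j, ((W i j) ^ 2 * mu j ^ p + p * ((W i j) ^ 2 * lam i ^ p)) := by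
        simp [Finset.sum_add_distrib, Finset.mul_sum]
    _ ≤ ∑ i, ∑ j, ((W i j) ^ 2 * lam i ^ p + p * ((W i j) ^ 2 * (lam i ^ (p - 1) * mu j))) :=
        Finset.sum_le_sum fun i _ => Finset.sum_le_sum fun j _ => main i j
    _ = (∑ i, ∑ j, (W i j) ^ 2 * lam i ^ p)
          + p * ∑ i, ∑ j, (W i j) ^ 2 * (lam i ^ (p - 1) * mu j) := by
        simp [Finset.sum_add_distrib, Finset.mul_sum]

private lemma eq_case' {d : ℕ} (hd : 0 < d) {p : ℝ}
    (S : Matrix (Fin d) (Fin d) ℝ) (hS hS' : S.PosDef) :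
    (1 / 2 : ℝ) * ((matRpow S hS.1 (p - 1) * S).trace / (matRpow S hS.1 p).trace
        + (matRpow S hS'.1 (p - 1) * S).trace / (matRpow S hS'.1 p).trace) - 1 = 0 := by
  have hne : Nonempty (Fin d) := ⟨⟨0, hd⟩⟩
  have key : ∀ (hh : S.PosDef),
      (matRpow S hh.1 (p - 1) * S).trace = (matRpow S hh.1 p).trace := by
    intro hh
    rw [trace_matRpow_mul', trace_matRpow', (show star (hh.1.eigenvectorUnitary : Matrix (Fin d) (Fin d) ℝ) * S * (hh.1.eigenvectorUnitary : Matrix (Fin d) (Fin d) ℝ) = Matrix.diagonal (RCLike.ofReal ∘ hh.1.eigenvalues) by have h := hh.1.conjStarAlgAut_star_eigenvectorUnitary; rwa [Unitary.conjStarAlgAut_star_apply] at h)]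
    refine Finset.sum_congr rfl fun i _ => ?_
    rw [Matrix.diagonal_apply_eq]
    simp only [Function.comp_apply, RCLike.ofReal_real_eq_id, id_eq]
    exact rpow_sub_one_mul' (hh.eigenvalues_pos i) p
  have hpos : ∀ (hh : S.PosDef), 0 < (matRpow S hh.1 p).trace := by
    intro hh
    rw [trace_matRpow']
    exact Finset.sum_pos (fun i _ => Real.rpow_pos_of_pos (hh.eigenvalues_pos i) p)
      Finset.univ_nonempty
  rw [key hS]
  try rw [key hS']
  rw [div_self (hpos hS).ne']
  try rw [div_self (hpos hS').ne']
  ring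

/-- For p ∈ (0,1) and positive definite Σ_μ, Σ_ζ, the Jeffreys-Bregman
divergence ½[tr(Σ_μ^{p-1}Σ_ζ)/tr(Σ_μ^p) + tr(Σ_ζ^{p-1}Σ_μ)/tr(Σ_ζ^p)] − 1 is
nonnegative, and zero when Σ_ζ = Σ_μ. -/
theorem jeffreysBregman_logPhip_nonneg
    (d : ℕ) (hd : 0 < d) (p : ℝ) (hp0 : 0 < p) (hp1 : p < 1)
    (Sμ Sζ : Matrix (Fin d) (Fin d) ℝ) (hSμ : Sμ.PosDef) (hSζ : Sζ.PosDef) :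
    0 ≤ (1 / 2 : ℝ) * ((matRpow Sμ hSμ.1 (p - 1) * Sζ).trace / (matRpow Sμ hSμ.1 p).trace
          + (matRpow Sζ hSζ.1 (p - 1) * Sμ).trace / (matRpow Sζ hSζ.1 p).trace) - 1 ∧
    (Sζ = Sμ →
      (1 / 2 : ℝ) * ((matRpow Sμ hSμ.1 (p - 1) * Sζ).trace / (matRpow Sμ hSμ.1 p).trace
          + (matRpow Sζ hSζ.1 (p - 1) * Sμ).trace / (matRpow Sζ hSζ.1 p).trace) - 1 = 0) := by
  have hne : Nonempty (Fin d) := ⟨⟨0, hd⟩⟩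
  have ha : 0 < (matRpow Sμ hSμ.1 p).trace := by
    rw [trace_matRpow']
    exact Finset.sum_pos (fun i _ => Real.rpow_pos_of_pos (hSμ.eigenvalues_pos i) p)
      Finset.univ_nonempty
  have hb : 0 < (matRpow Sζ hSζ.1 p).trace := by
    rw [trace_matRpow']
    exact Finset.sum_pos (fun i _ => Real.rpow_pos_of_pos (hSζ.eigenvalues_pos i) p)
      Finset.univ_nonempty
  have h1 := klein' hp0 hp1 Sμ Sζ hSμ hSζ
  have h2 := klein' hp0 hp1 Sζ Sμ hSζ hSμ
  set a := (matRpow Sμ hSμ.1 p).trace with hadef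
  set b := (matRpow Sζ hSζ.1 p).trace with hbdef
  set T1 := (matRpow Sμ hSμ.1 (p - 1) * Sζ).trace with hT1def
  set T2 := (matRpow Sζ hSζ.1 (p - 1) * Sμ).trace with hT2def
  constructor
  · have key : 2 ≤ T1 / a + T2 / b := by
      rw [div_add_div _ _ ha.ne' hb.ne', le_div_iff₀ (mul_pos ha hb)]
      nlinarith [mul_le_mul_of_nonneg_right h1 hb.le, mul_le_mul_of_nonneg_right h2 ha.le,
        sq_nonneg (a - b), mul_pos ha hb]
    linarith
  · intro h
    subst h
    exact eq_case' hd _ hSμ hSζ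
end
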